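/- Let $V$ be a continuous section of trace-free symmetric endomorphisms of the tangent bundle of the 2-sphere $S^2$, i.e., a continuous map assigning to each $v \in S^2$ a symmetric trace-free endomorphism $u(v)$ of $T_v S^2$. Then there exists $v_0 \in S^2$ with $u(v_0) = 0$. -/

import Mathlib

open scoped RealInnerProductSpace
open Complex Finset

set_option linter.unusedSectionVars false


-- ratio in unit ball around 1 lies in slitPlane
lemma ratio_re_pos {q : ℂ} (h : ‖q - 1‖ < 1) : 0 < q.re := by
  have h2 : (q.re - 1)^2 + q.im^2 < 1 := by
    have := Complex.sq_norm (q - 1)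
    have h3 : ‖q-1‖ ^ 2 < 1 := by nlinarith [norm_nonneg (q-1)]
    rw [Complex.sq_norm, Complex.normSq_apply] at h3
    simp only [Complex.sub_re, Complex.sub_im, Complex.one_re, Complex.one_im] at h3
    nlinarith [h3]
  nlinarith [sq_nonneg q.im]

lemma windingW (f : ℂ → ℂ) (hf : Continuous f) (h0 : ∀ z, f z ≠ 0) (R : ℝ) (hR : 0 < R)
    (c : ℂ) (hc : c ≠ 0)
    (hest : ∀ z : ℂ, ‖z‖ = R →
      ‖f z - (z / (starRingEnd ℂ) z)^2 * c‖ < ‖c‖) :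
    False := by
  classical
  set K := Metric.closedBall (0:ℂ) R with hK
  have hKc : IsCompact K := isCompact_closedBall _ _
  have hKne : K.Nonempty := ⟨0, by simp [hK, le_of_lt hR]⟩
  -- minimum of |f| on K
  obtain ⟨z₀, hz₀K, hz₀min⟩ := hKc.exists_isMinOn hKne ((continuous_norm.comp hf).continuousOn)
  set m := ‖f z₀‖ with hm
  have hmpos : 0 < m := by
    have h := h0 z₀
    simpa [hm] using (norm_pos_iff.mpr h)
  -- uniform continuity
  have hUC : UniformContinuousOn f K := hKc.uniformContinuousOn_of_continuous hf.continuousOn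
  rw [Metric.uniformContinuousOn_iff] at hUC
  obtain ⟨δ, hδpos, hδ⟩ := hUC m hmpos
  obtain ⟨n, hn⟩ := exists_nat_gt (R / δ)
  have hnpos : 0 < (n:ℝ) := lt_of_le_of_lt (div_nonneg hR.le hδpos.le) hn
  have hn0 : (n:ℝ) ≠ 0 := ne_of_gt hnpos
  have hRn : R / n < δ := by
    rw [div_lt_iff₀ hnpos]
    have h' : (R/δ)*δ = R := div_mul_cancel₀ R (ne_of_gt hδpos)
    nlinarith [mul_lt_mul_of_pos_right hn hδpos]
  -- points along segment
  have hptK : ∀ (p : ℂ), p ∈ K → ∀ k : ℕ, k ≤ n → ((k:ℂ)/n) * p ∈ K := by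
    intro p hp k hk
    simp only [hK, Metric.mem_closedBall, dist_zero_right] at hp ⊢
    rw [norm_mul]
    have h1 : ‖(k:ℂ)/(n:ℂ)‖ ≤ 1 := by
      rw [norm_div]
      simp only [Complex.norm_natCast]
      rw [div_le_one hnpos]
      exact_mod_cast hk
    calc ‖(k:ℂ)/n‖ * ‖p‖ ≤ 1 * ‖p‖ := by
          apply mul_le_mul_of_nonneg_right h1 (norm_nonneg _)
      _ ≤ R := by simpa using hp
  have hstep : ∀ (p : ℂ), p ∈ K → ∀ k : ℕ, k < n →
      ‖f (((k:ℂ)+1)/n * p) - f ((k:ℂ)/n * p)‖ < m := by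
    intro p hp k hk
    have h1 : (((k:ℂ)+1)/n * p) ∈ K := by
      have h := hptK p hp (k+1) (by omega); push_cast at h; exact h
    have h2 : ((k:ℂ)/n * p) ∈ K := hptK p hp k hk.le
    have hd : dist (((k:ℂ)+1)/n * p) ((k:ℂ)/n * p) < δ := by
      rw [Complex.dist_eq]
      have : ((k:ℂ)+1)/n * p - (k:ℂ)/n * p = p / n := by field_simp; ring
      rw [this]
      rw [norm_div]
      simp only [Complex.norm_natCast]
      have hpR : ‖p‖ ≤ R := by
        simpa [hK, Metric.mem_closedBall, dist_zero_right] using hp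
      calc ‖p‖ / (n:ℝ) ≤ R / n := by gcongr
        _ < δ := hRn
    rw [← Complex.dist_eq]; exact hδ _ h1 _ h2 hd
  -- the ratios lie in the slit plane
  have habsmin : ∀ p ∈ K, m ≤ ‖f p‖ := by
    intro p hp
    exact isMinOn_iff.mp hz₀min p hp
  have hratio : ∀ p ∈ K, ∀ k : ℕ, k < n →
      ‖f (((k:ℂ)+1)/n * p) / f ((k:ℂ)/n * p) - 1‖ < 1 := by
    intro p hp k hk
    have hden : f ((k:ℂ)/n * p) ≠ 0 := h0 _
    have habs : 0 < ‖f ((k:ℂ)/n * p)‖ := norm_pos_iff.mpr hden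
    rw [div_sub_one hden, norm_div, div_lt_one habs]
    calc ‖f (((k:ℂ)+1)/n * p) - f ((k:ℂ)/n * p)‖ < m := hstep p hp k hk
      _ ≤ ‖f ((k:ℂ)/n * p)‖ := habsmin _ (hptK p hp k hk.le)
  -- the logarithm
  set φ : ℂ → ℂ := fun p => Complex.log (f 0) +
    ∑ k ∈ Finset.range n, Complex.log (f (((k:ℂ)+1)/n * p) / f ((k:ℂ)/n * p)) with hφ
  have hφcont : ContinuousOn φ K := by
    apply ContinuousOn.add continuousOn_const
    apply continuousOn_finset_sum
    intro k hk
    apply ContinuousOn.clog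
    · apply Continuous.continuousOn
      exact (hf.comp (by fun_prop)).div (hf.comp (by fun_prop)) (fun p => h0 _)
    · intro p hp
      left
      exact ratio_re_pos (hratio p hp k (mem_range.mp hk))
  have hexp : ∀ p ∈ K, Complex.exp (φ p) = f p := by
    intro p hp
    have key : ∀ M : ℕ, M ≤ n → Complex.exp (Complex.log (f 0) +
        ∑ k ∈ Finset.range M, Complex.log (f (((k:ℂ)+1)/n * p) / f ((k:ℂ)/n * p)))
        = f ((M:ℂ)/n * p) := by
      intro M
      induction M with
      | zero => intro _; simp [Complex.exp_log (h0 0)]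
      | succ M ih =>
        intro hM
        have ihM := ih (by omega)
        rw [Finset.sum_range_succ, ← add_assoc, Complex.exp_add, ihM,
          Complex.exp_log (div_ne_zero (h0 _) (h0 _)), mul_comm,
          div_mul_cancel₀ _ (h0 _)]
        norm_cast
    have := key n le_rfl
    rwa [div_self (by exact_mod_cast hn0), one_mul] at this
  -- the boundary circle
  set zc : ℝ → ℂ := fun α => (R:ℂ) * Complex.exp ((α:ℂ) * Complex.I) with hzc
  have hzcK : ∀ α, zc α ∈ K := by
    intro α
    simp only [hzc, hK, Metric.mem_closedBall, dist_zero_right, norm_mul]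
    rw [Complex.norm_exp_ofReal_mul_I]
    simp [abs_of_pos hR]
  have hzcabs : ∀ α, ‖zc α‖ = R := by
    intro α
    simp only [hzc, norm_mul, Complex.norm_exp_ofReal_mul_I]
    simp [abs_of_pos hR]
  have hzcne : ∀ α, zc α ≠ 0 := by
    intro α h
    have := hzcabs α
    rw [h] at this
    simp at this
    exact absurd this.symm (ne_of_gt hR)
  have hconj : ∀ α : ℝ, (starRingEnd ℂ) (zc α) = (R:ℂ) * Complex.exp (-((α:ℂ) * Complex.I)) := by
    intro α
    simp only [hzc, map_mul, Complex.conj_ofReal, ← Complex.exp_conj]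
    congr 2
    simp [Complex.conj_ofReal]
  have hzdiv : ∀ α : ℝ, (zc α / (starRingEnd ℂ) (zc α))^2 = Complex.exp (4*(α:ℂ)*Complex.I) := by
    intro α
    rw [hconj α]
    rw [hzc]
    simp only []
    rw [mul_div_mul_left _ _ (by exact_mod_cast ne_of_gt hR : (R:ℂ) ≠ 0)]
    rw [← Complex.exp_sub, sq, ← Complex.exp_add]
    congr 1
    ring
  -- the angle function
  set χ : ℝ → ℝ := fun α => (φ (zc α)).im - 4*α - (Complex.log c).im with hχ
  have hχcont : Continuous χ := by
    have h1 : Continuous fun α => φ (zc α) := by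
      apply hφcont.comp_continuous (by fun_prop) hzcK
    exact ((Complex.continuous_im.comp h1).sub
      ((continuous_const.mul continuous_id'))).sub continuous_const
  have hcos : ∀ α : ℝ, 0 < Real.cos (χ α) := by
    intro α
    set W : ℂ := φ (zc α) - (4*(α:ℂ)*Complex.I + Complex.log c) with hW
    have hWim : W.im = χ α := by
      simp [hW, hχ, Complex.sub_im, Complex.add_im, Complex.mul_im, Complex.I_im, Complex.I_re]
      ring
    have heW : Complex.exp W = f (zc α) * (Complex.exp (4*(α:ℂ)*Complex.I + Complex.log c))⁻¹ := by
      rw [hW, Complex.exp_sub, hexp _ (hzcK α)]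
      rw [div_eq_mul_inv]
    have heabs : ‖Complex.exp (4*(α:ℂ)*Complex.I + Complex.log c)‖ = ‖c‖ := by
      rw [Complex.exp_add, Complex.exp_log hc, norm_mul]
      have : (4*(α:ℂ)*Complex.I) = ((4*α : ℝ):ℂ) * Complex.I := by push_cast; ring
      rw [this, Complex.norm_exp_ofReal_mul_I, one_mul]
    have hene : Complex.exp (4*(α:ℂ)*Complex.I + Complex.log c) ≠ 0 := Complex.exp_ne_zero _
    have hlt : ‖Complex.exp W - 1‖ < 1 := by
      have : Complex.exp W - 1 = (f (zc α) - Complex.exp (4*(α:ℂ)*Complex.I + Complex.log c)) *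
          (Complex.exp (4*(α:ℂ)*Complex.I + Complex.log c))⁻¹ := by
        rw [heW]; field_simp
      rw [this, norm_mul, norm_inv, heabs]
      rw [mul_inv_lt_iff₀ (norm_pos_iff.mpr hc), one_mul]
      calc ‖f (zc α) - Complex.exp (4*(α:ℂ)*Complex.I + Complex.log c)‖
          = ‖f (zc α) - (zc α / (starRingEnd ℂ) (zc α))^2 * c‖ := by
            rw [Complex.exp_add, Complex.exp_log hc, hzdiv α]
        _ < ‖c‖ := hest (zc α) (hzcabs α)
    have hre : 0 < (Complex.exp W).re := ratio_re_pos hlt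
    rw [Complex.exp_re] at hre
    rw [hWim] at hre
    nlinarith [Real.exp_pos W.re, Real.cos_le_one (χ α), hre]
  -- contradiction via IVT
  have hperiod : zc (2*Real.pi) = zc 0 := by
    simp only [hzc]
    congr 1
    push_cast
    rw [Complex.exp_two_pi_mul_I]
    simp
  have hχval : χ (2*Real.pi) = χ 0 - 8*Real.pi := by
    simp only [hχ, hperiod]
    ring
  have hivt : (χ 0 - Real.pi) ∈ Set.Icc (χ (2*Real.pi)) (χ 0) := by
    constructor
    · rw [hχval]; linarith [Real.pi_pos]
    · linarith [Real.pi_pos]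
  obtain ⟨α₀, _, hα₀⟩ := intermediate_value_Icc' (by linarith [Real.pi_pos] : (0:ℝ) ≤ 2*Real.pi)
    hχcont.continuousOn hivt
  have h1 := hcos α₀
  rw [hα₀] at h1
  rw [Real.cos_sub_pi] at h1
  linarith [hcos 0]

noncomputable def mk3 (a b c : ℝ) : EuclideanSpace ℝ (Fin 3) :=
  (EuclideanSpace.equiv (Fin 3) ℝ).symm ![a, b, c]

lemma inner_mk3 (a b c d e f : ℝ) : ⟪mk3 a b c, mk3 d e f⟫ = a*d + b*e + c*f := by
  simp [mk3, PiLp.inner_apply, Fin.sum_univ_three]; ring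

lemma continuous_mk3 {α : Type*} [TopologicalSpace α] {f g h : α → ℝ}
    (hf : Continuous f) (hg : Continuous g) (hh : Continuous h) :
    Continuous fun z => mk3 (f z) (g z) (h z) := by
  unfold mk3
  apply ((EuclideanSpace.equiv (Fin 3) ℝ).symm.continuous).comp
  refine continuous_pi ?_
  intro i
  fin_cases i <;> simpa

noncomputable def sV (x y : ℝ) : EuclideanSpace ℝ (Fin 3) :=
  mk3 (2*x/(1+x^2+y^2)) (2*y/(1+x^2+y^2)) ((x^2+y^2-1)/(1+x^2+y^2))
noncomputable def sE1 (x y : ℝ) : EuclideanSpace ℝ (Fin 3) :=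
  mk3 ((1-x^2+y^2)/(1+x^2+y^2)) (-(2*x*y)/(1+x^2+y^2)) (2*x/(1+x^2+y^2))
noncomputable def sE2 (x y : ℝ) : EuclideanSpace ℝ (Fin 3) :=
  mk3 (-(2*x*y)/(1+x^2+y^2)) ((1+x^2-y^2)/(1+x^2+y^2)) (2*y/(1+x^2+y^2))
noncomputable def tV (s t : ℝ) : EuclideanSpace ℝ (Fin 3) :=
  mk3 (2*s/(1+s^2+t^2)) (2*t/(1+s^2+t^2)) ((1-s^2-t^2)/(1+s^2+t^2))
noncomputable def tE1 (s t : ℝ) : EuclideanSpace ℝ (Fin 3) :=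
  mk3 (-(1-s^2+t^2)/(1+s^2+t^2)) (2*s*t/(1+s^2+t^2)) (2*s/(1+s^2+t^2))
noncomputable def tE2 (s t : ℝ) : EuclideanSpace ℝ (Fin 3) :=
  mk3 (-(2*s*t)/(1+s^2+t^2)) ((1+s^2-t^2)/(1+s^2+t^2)) (-(2*t)/(1+s^2+t^2))

section inners
variable (x y : ℝ)

lemma i_sVV : ⟪sV x y, sV x y⟫ = 1 := by
  have hD : (1+x^2+y^2) ≠ 0 := by positivity
  rw [sV, inner_mk3]; field_simp; ring
lemma i_sV1 : ⟪sV x y, sE1 x y⟫ = 0 := by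
  have hD : (1+x^2+y^2) ≠ 0 := by positivity
  rw [sV, sE1, inner_mk3]; field_simp; ring
lemma i_sV2 : ⟪sV x y, sE2 x y⟫ = 0 := by
  have hD : (1+x^2+y^2) ≠ 0 := by positivity
  rw [sV, sE2, inner_mk3]; field_simp; ring
lemma i_s11 : ⟪sE1 x y, sE1 x y⟫ = 1 := by
  have hD : (1+x^2+y^2) ≠ 0 := by positivity
  rw [sE1, inner_mk3]; field_simp; ring
lemma i_s12 : ⟪sE1 x y, sE2 x y⟫ = 0 := by
  have hD : (1+x^2+y^2) ≠ 0 := by positivity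
  rw [sE1, sE2, inner_mk3]; field_simp; ring
lemma i_s22 : ⟪sE2 x y, sE2 x y⟫ = 1 := by
  have hD : (1+x^2+y^2) ≠ 0 := by positivity
  rw [sE2, inner_mk3]; field_simp; ring

lemma i_tVV : ⟪tV x y, tV x y⟫ = 1 := by
  have hD : (1+x^2+y^2) ≠ 0 := by positivity
  rw [tV, inner_mk3]; field_simp; ring
lemma i_tV1 : ⟪tV x y, tE1 x y⟫ = 0 := by
  have hD : (1+x^2+y^2) ≠ 0 := by positivity
  rw [tV, tE1, inner_mk3]; field_simp; ring
lemma i_tV2 : ⟪tV x y, tE2 x y⟫ = 0 := by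
  have hD : (1+x^2+y^2) ≠ 0 := by positivity
  rw [tV, tE2, inner_mk3]; field_simp; ring
lemma i_t11 : ⟪tE1 x y, tE1 x y⟫ = 1 := by
  have hD : (1+x^2+y^2) ≠ 0 := by positivity
  rw [tE1, inner_mk3]; field_simp; ring
lemma i_t12 : ⟪tE1 x y, tE2 x y⟫ = 0 := by
  have hD : (1+x^2+y^2) ≠ 0 := by positivity
  rw [tE1, tE2, inner_mk3]; field_simp; ring
lemma i_t22 : ⟪tE2 x y, tE2 x y⟫ = 1 := by
  have hD : (1+x^2+y^2) ≠ 0 := by positivity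
  rw [tE2, inner_mk3]; field_simp; ring
end inners

lemma onb_of_inners {q e1 e2 : EuclideanSpace ℝ (Fin 3)}
    (hqq : ⟪q,q⟫ = 1) (hq1 : ⟪q,e1⟫ = 0) (hq2 : ⟪q,e2⟫ = 0)
    (h11 : ⟪e1,e1⟫ = 1) (h12 : ⟪e1,e2⟫ = 0) (h22 : ⟪e2,e2⟫ = 1) :
    Orthonormal ℝ ![q, e1, e2] := by
  rw [orthonormal_iff_ite]
  intro i j
  have h1q : ⟪e1,q⟫ = 0 := by rw [real_inner_comm]; exact hq1
  have h2q : ⟪e2,q⟫ = 0 := by rw [real_inner_comm]; exact hq2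
  have h21 : ⟪e2,e1⟫ = 0 := by rw [real_inner_comm]; exact h12
  have nq : ‖q‖ = 1 := by rw [norm_eq_sqrt_real_inner, hqq, Real.sqrt_one]
  have n1 : ‖e1‖ = 1 := by rw [norm_eq_sqrt_real_inner, h11, Real.sqrt_one]
  have n2 : ‖e2‖ = 1 := by rw [norm_eq_sqrt_real_inner, h22, Real.sqrt_one]
  fin_cases i <;> fin_cases j <;>
    simp [hqq, hq1, hq2, h11, h12, h22, h1q, h2q, h21, Fin.ext_iff, nq, n1, n2]

lemma on_s (x y : ℝ) : Orthonormal ℝ ![sV x y, sE1 x y, sE2 x y] :=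
  onb_of_inners (i_sVV x y) (i_sV1 x y) (i_sV2 x y) (i_s11 x y) (i_s12 x y) (i_s22 x y)

lemma on_t (s t : ℝ) : Orthonormal ℝ ![tV s t, tE1 s t, tE2 s t] :=
  onb_of_inners (i_tVV s t) (i_tV1 s t) (i_tV2 s t) (i_t11 s t) (i_t12 s t) (i_t22 s t)

lemma sV_mem (x y : ℝ) : sV x y ∈ Metric.sphere (0 : EuclideanSpace ℝ (Fin 3)) 1 := by
  have h : ‖sV x y‖ = 1 := by
    have := i_sVV x y
    rw [real_inner_self_eq_norm_sq] at this
    nlinarith [norm_nonneg (sV x y)]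
  simpa [mem_sphere_iff_norm] using h

lemma tV_mem (s t : ℝ) : tV s t ∈ Metric.sphere (0 : EuclideanSpace ℝ (Fin 3)) 1 := by
  have h : ‖tV s t‖ = 1 := by
    have := i_tVV s t
    rw [real_inner_self_eq_norm_sq] at this
    nlinarith [norm_nonneg (tV s t)]
  simpa [mem_sphere_iff_norm] using h

lemma tV_eq (x y : ℝ) (h : x^2+y^2 ≠ 0) : tV (x/(x^2+y^2)) (y/(x^2+y^2)) = sV x y := by
  have hD : (1+x^2+y^2) ≠ 0 := by positivity
  ext i
  fin_cases i <;>
    (simp [tV, sV, mk3]; field_simp; ring)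

lemma tE1_eq (x y : ℝ) (h : x^2+y^2 ≠ 0) :
    tE1 (x/(x^2+y^2)) (y/(x^2+y^2)) =
      ((x^2-y^2)/(x^2+y^2)) • sE1 x y + (2*x*y/(x^2+y^2)) • sE2 x y := by
  have hD : (1+x^2+y^2) ≠ 0 := by positivity
  ext i
  fin_cases i <;>
    (simp [tE1, sE1, sE2, mk3, PiLp.add_apply, PiLp.smul_apply, smul_eq_mul];
     field_simp; ring)

lemma tE2_eq (x y : ℝ) (h : x^2+y^2 ≠ 0) :
    tE2 (x/(x^2+y^2)) (y/(x^2+y^2)) =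
      (-(2*x*y/(x^2+y^2))) • sE1 x y + ((x^2-y^2)/(x^2+y^2)) • sE2 x y := by
  have hD : (1+x^2+y^2) ≠ 0 := by positivity
  ext i
  fin_cases i <;>
    (simp [tE2, sE1, sE2, mk3, PiLp.add_apply, PiLp.smul_apply, smul_eq_mul];
     field_simp; ring)

noncomputable def onb3 {fam : Fin 3 → EuclideanSpace ℝ (Fin 3)} (h : Orthonormal ℝ fam) :
    OrthonormalBasis (Fin 3) ℝ (EuclideanSpace ℝ (Fin 3)) :=
  (basisOfOrthonormalOfCardEqFinrank h (by simp)).toOrthonormalBasis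
    (by rwa [coe_basisOfOrthonormalOfCardEqFinrank])

lemma onb3_coe {fam : Fin 3 → EuclideanSpace ℝ (Fin 3)} (h : Orthonormal ℝ fam) :
    ⇑(onb3 h) = fam := by
  rw [onb3, Module.Basis.coe_toOrthonormalBasis, coe_basisOfOrthonormalOfCardEqFinrank]

lemma trace_onb3 (A : EuclideanSpace ℝ (Fin 3) →ₗ[ℝ] EuclideanSpace ℝ (Fin 3))
    (b : OrthonormalBasis (Fin 3) ℝ (EuclideanSpace ℝ (Fin 3))) :
    LinearMap.trace ℝ _ A = ∑ i, ⟪b i, A (b i)⟫ := by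
  classical
  rw [LinearMap.trace_eq_matrix_trace ℝ b.toBasis, Matrix.trace]
  congr 1
  ext i
  rw [Matrix.diag_apply, LinearMap.toMatrix_apply, b.coe_toBasis_repr_apply,
    b.repr_apply_apply, b.coe_toBasis]

section frame
variable (A : EuclideanSpace ℝ (Fin 3) →L[ℝ] EuclideanSpace ℝ (Fin 3))
  {q e1 e2 : EuclideanSpace ℝ (Fin 3)}
  (hon : Orthonormal ℝ ![q, e1, e2])
  (hsymA : ∀ x y, ⟪A x, y⟫ = ⟪x, A y⟫)
  (hkerA : A q = 0)
  (htrA : LinearMap.trace ℝ _ (A : EuclideanSpace ℝ (Fin 3) →ₗ[ℝ] EuclideanSpace ℝ (Fin 3)) = 0)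

include hon hsymA hkerA htrA

lemma frame_trace : ⟪A e1, e1⟫ + ⟪A e2, e2⟫ = 0 := by
  have h := trace_onb3 (A : EuclideanSpace ℝ (Fin 3) →ₗ[ℝ] EuclideanSpace ℝ (Fin 3)) (onb3 hon)
  rw [htrA, onb3_coe, Fin.sum_univ_three] at h
  simp only [Matrix.cons_val_zero, Matrix.cons_val_one, Matrix.head_cons,
    Matrix.cons_val_two, Matrix.tail_cons, ContinuousLinearMap.coe_coe] at h
  rw [hkerA] at h
  simp only [inner_zero_right] at h
  have c1 : ⟪A e1, e1⟫ = ⟪e1, A e1⟫ := real_inner_comm _ _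
  have c2 : ⟪A e2, e2⟫ = ⟪e2, A e2⟫ := real_inner_comm _ _
  linarith

lemma frame_vanish (ha : ⟪A e1, e1⟫ = 0) (hb : ⟪A e1, e2⟫ = 0) : A = 0 := by
  have htr2 : ⟪A e2, e2⟫ = 0 := by
    have := frame_trace A hon hsymA hkerA htrA; linarith
  set b := onb3 hon with hbdef
  have hb0 : b 0 = q := by rw [hbdef, onb3_coe]; rfl
  have hb1 : b 1 = e1 := by rw [hbdef, onb3_coe]; rfl
  have hb2 : b 2 = e2 := by rw [hbdef, onb3_coe]; rfl
  have key : ∀ x : EuclideanSpace ℝ (Fin 3),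
      ⟪q, A x⟫ = 0 → ⟪e1, A x⟫ = 0 → ⟪e2, A x⟫ = 0 → A x = 0 := by
    intro x h0 h1 h2
    have := b.sum_repr (A x)
    rw [Fin.sum_univ_three] at this
    simp only [b.repr_apply_apply, hb0, hb1, hb2, h0, h1, h2, zero_smul, add_zero] at this
    simpa using this.symm
  have hA1 : A e1 = 0 := by
    refine key e1 ?_ ?_ ?_
    · rw [← hsymA, hkerA, inner_zero_left]
    · rw [real_inner_comm]; exact ha
    · rw [real_inner_comm]; exact hb
  have hA2 : A e2 = 0 := by
    refine key e2 ?_ ?_ ?_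
    · rw [← hsymA, hkerA, inner_zero_left]
    · rw [← hsymA]; exact hb
    · rw [real_inner_comm]; exact htr2
  ext x
  have hx := b.sum_repr x
  rw [Fin.sum_univ_three, hb0, hb1, hb2] at hx
  rw [← hx]
  simp [map_add, map_smul, hkerA, hA1, hA2]

end frame

lemma expand_inner (A : EuclideanSpace ℝ (Fin 3) →L[ℝ] EuclideanSpace ℝ (Fin 3))
    (e1 e2 : EuclideanSpace ℝ (Fin 3)) (c s : ℝ)
    (hb : ⟪A e2, e1⟫ = ⟪A e1, e2⟫) (hcc : ⟪A e2, e2⟫ = -⟪A e1, e1⟫) :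
    ⟪A (c • e1 + s • e2), c • e1 + s • e2⟫
      = (c^2-s^2) * ⟪A e1, e1⟫ + 2*c*s*⟪A e1, e2⟫ ∧
    ⟪A (c • e1 + s • e2), (-s) • e1 + c • e2⟫
      = (c^2-s^2) * ⟪A e1, e2⟫ - 2*c*s*⟪A e1, e1⟫ := by
  constructor <;>
  · simp only [map_add, ContinuousLinearMap.map_smul, inner_add_left, inner_add_right,
      real_inner_smul_left, real_inner_smul_right, neg_smul, inner_neg_left, inner_neg_right]
    rw [hb, hcc]
    ring


lemma complex_chart_rel (z : ℂ) (a b C S : ℝ)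
    (hC : C * (z.re^2+z.im^2) = z.re^2 - z.im^2)
    (hS : S * (z.re^2+z.im^2) = 2*z.re*z.im)
    (hCS : C^2 + S^2 = 1) :
    z^2 * ((((C^2-S^2) * a + 2*C*S*b : ℝ) : ℂ) + (((C^2-S^2)*b - 2*C*S*a : ℝ) : ℂ) * Complex.I)
    = (starRingEnd ℂ z)^2 * ((a:ℂ) + (b:ℂ) * Complex.I) := by
  apply Complex.ext <;>
    simp only [Complex.mul_re, Complex.mul_im, Complex.add_re, Complex.add_im,
      Complex.ofReal_re, Complex.ofReal_im, Complex.I_re, Complex.I_im,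
      Complex.conj_re, Complex.conj_im, pow_two,
      mul_zero, zero_mul, sub_zero, zero_sub, add_zero, zero_add, mul_one, mul_neg, neg_neg]
  · linear_combination (a - ((C^2-S^2)*a + 2*C*S*b)) * hC
      + (((C^2-S^2)*b - 2*C*S*a) + b) * hS
      + (z.re^2+z.im^2)*(a*C+b*S) * hCS
  · linear_combination (b - ((C^2-S^2)*b - 2*C*S*a)) * hC
      + (-((C^2-S^2)*a + 2*C*S*b) - a) * hS
      + (z.re^2+z.im^2)*(C*b - S*a) * hCS

/-- A continuous field of trace-free symmetric endomorphisms of the tangent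
bundle of `S²` vanishes somewhere.  Here `T_v S²` is modelled as
`v^⊥ ⊆ ℝ³`: for each unit vector `v`, `u v` is a symmetric endomorphism of
`ℝ³` killing `v` (hence, by symmetry, preserving `v^⊥`, i.e. an endomorphism
of `T_v S²`) whose trace (= its trace on `v^⊥`) is zero. -/
theorem stmt15
    (u : EuclideanSpace ℝ (Fin 3) →
      (EuclideanSpace ℝ (Fin 3) →L[ℝ] EuclideanSpace ℝ (Fin 3)))
    (hcont : ContinuousOn u (Metric.sphere (0 : EuclideanSpace ℝ (Fin 3)) 1))
    (hsym : ∀ v ∈ Metric.sphere (0 : EuclideanSpace ℝ (Fin 3)) 1,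
      ∀ x y, ⟪u v x, y⟫ = ⟪x, u v y⟫)
    (hker : ∀ v ∈ Metric.sphere (0 : EuclideanSpace ℝ (Fin 3)) 1, u v v = 0)
    (htr : ∀ v ∈ Metric.sphere (0 : EuclideanSpace ℝ (Fin 3)) 1,
      LinearMap.trace ℝ _ (u v : EuclideanSpace ℝ (Fin 3) →ₗ[ℝ] EuclideanSpace ℝ (Fin 3)) = 0) :
    ∃ v₀ ∈ Metric.sphere (0 : EuclideanSpace ℝ (Fin 3)) 1, u v₀ = 0 := by

  by_contra hcon
  push_neg at hcon
  have hden : ∀ z : ℂ, (1 + z.re^2 + z.im^2) ≠ 0 := fun z => by positivity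
  have hsVc : Continuous fun z : ℂ => sV z.re z.im := by
    unfold sV
    exact continuous_mk3 (Continuous.div (by fun_prop) (by fun_prop) hden)
      (Continuous.div (by fun_prop) (by fun_prop) hden)
      (Continuous.div (by fun_prop) (by fun_prop) hden)
  have hsE1c : Continuous fun z : ℂ => sE1 z.re z.im := by
    unfold sE1
    exact continuous_mk3 (Continuous.div (by fun_prop) (by fun_prop) hden)
      (Continuous.div (by fun_prop) (by fun_prop) hden)
      (Continuous.div (by fun_prop) (by fun_prop) hden)
  have hsE2c : Continuous fun z : ℂ => sE2 z.re z.im := by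
    unfold sE2
    exact continuous_mk3 (Continuous.div (by fun_prop) (by fun_prop) hden)
      (Continuous.div (by fun_prop) (by fun_prop) hden)
      (Continuous.div (by fun_prop) (by fun_prop) hden)
  have htVc : Continuous fun w : ℂ => tV w.re w.im := by
    unfold tV
    exact continuous_mk3 (Continuous.div (by fun_prop) (by fun_prop) hden)
      (Continuous.div (by fun_prop) (by fun_prop) hden)
      (Continuous.div (by fun_prop) (by fun_prop) hden)
  have htE1c : Continuous fun w : ℂ => tE1 w.re w.im := by
    unfold tE1
    exact continuous_mk3 (Continuous.div (by fun_prop) (by fun_prop) hden)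
      (Continuous.div (by fun_prop) (by fun_prop) hden)
      (Continuous.div (by fun_prop) (by fun_prop) hden)
  have htE2c : Continuous fun w : ℂ => tE2 w.re w.im := by
    unfold tE2
    exact continuous_mk3 (Continuous.div (by fun_prop) (by fun_prop) hden)
      (Continuous.div (by fun_prop) (by fun_prop) hden)
      (Continuous.div (by fun_prop) (by fun_prop) hden)
  have hAc : Continuous fun z : ℂ => u (sV z.re z.im) :=
    hcont.comp_continuous hsVc fun z => sV_mem _ _
  have hBc : Continuous fun w : ℂ => u (tV w.re w.im) :=
    hcont.comp_continuous htVc fun w => tV_mem _ _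
  set f : ℂ → ℂ := fun z =>
    ((⟪u (sV z.re z.im) (sE1 z.re z.im), sE1 z.re z.im⟫ : ℝ) : ℂ) +
    ((⟪u (sV z.re z.im) (sE1 z.re z.im), sE2 z.re z.im⟫ : ℝ) : ℂ) * Complex.I with hfdef
  set g : ℂ → ℂ := fun w =>
    ((⟪u (tV w.re w.im) (tE1 w.re w.im), tE1 w.re w.im⟫ : ℝ) : ℂ) +
    ((⟪u (tV w.re w.im) (tE1 w.re w.im), tE2 w.re w.im⟫ : ℝ) : ℂ) * Complex.I with hgdef
  have habz : ∀ a b : ℝ, ((a : ℂ) + (b:ℂ)*Complex.I) = 0 → a = 0 ∧ b = 0 := by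
    intro a b h
    constructor
    · simpa using congrArg Complex.re h
    · simpa using congrArg Complex.im h
  have hfc : Continuous f := by
    apply Continuous.add
    · exact Complex.continuous_ofReal.comp ((hAc.clm_apply hsE1c).inner hsE1c)
    · exact (Complex.continuous_ofReal.comp ((hAc.clm_apply hsE1c).inner hsE2c)).mul
        continuous_const
  have hgc : Continuous g := by
    apply Continuous.add
    · exact Complex.continuous_ofReal.comp ((hBc.clm_apply htE1c).inner htE1c)
    · exact (Complex.continuous_ofReal.comp ((hBc.clm_apply htE1c).inner htE2c)).mul
        continuous_const
  have hfne : ∀ z : ℂ, f z ≠ 0 := by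
    intro z h0
    obtain ⟨ha, hb⟩ := habz _ _ h0
    exact hcon _ (sV_mem z.re z.im)
      (frame_vanish (u (sV z.re z.im)) (on_s z.re z.im)
        (hsym _ (sV_mem _ _)) (hker _ (sV_mem _ _)) (htr _ (sV_mem _ _)) ha hb)
  have hgne : ∀ w : ℂ, g w ≠ 0 := by
    intro w h0
    obtain ⟨ha, hb⟩ := habz _ _ h0
    exact hcon _ (tV_mem w.re w.im)
      (frame_vanish (u (tV w.re w.im)) (on_t w.re w.im)
        (hsym _ (tV_mem _ _)) (hker _ (tV_mem _ _)) (htr _ (tV_mem _ _)) ha hb)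
  -- the transition relation
  have hrel : ∀ z : ℂ, z ≠ 0 →
      z^2 * g ((starRingEnd ℂ z)⁻¹) = ((starRingEnd ℂ z))^2 * f z := by
    intro z hz
    have hr2 : z.re^2 + z.im^2 ≠ 0 := by
      intro h
      apply hz
      have h1 : z.re = 0 := by nlinarith [sq_nonneg z.re, sq_nonneg z.im]
      have h2 : z.im = 0 := by nlinarith [sq_nonneg z.re, sq_nonneg z.im]
      exact Complex.ext h1 h2
    have hwre : ((starRingEnd ℂ z)⁻¹).re = z.re/(z.re^2+z.im^2) := by
      rw [Complex.inv_re, Complex.normSq_conj, Complex.conj_re, Complex.normSq_apply]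
      ring_nf
    have hwim : ((starRingEnd ℂ z)⁻¹).im = z.im/(z.re^2+z.im^2) := by
      rw [Complex.inv_im, Complex.normSq_conj, Complex.conj_im, Complex.normSq_apply]
      ring_nf
    have hmem := sV_mem z.re z.im
    have hsymA : ∀ x y, ⟪u (sV z.re z.im) x, y⟫ = ⟪x, u (sV z.re z.im) y⟫ := hsym _ hmem
    have hbb : ⟪u (sV z.re z.im) (sE2 z.re z.im), sE1 z.re z.im⟫
        = ⟪u (sV z.re z.im) (sE1 z.re z.im), sE2 z.re z.im⟫ := by
      rw [hsymA, real_inner_comm]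
    have hcc : ⟪u (sV z.re z.im) (sE2 z.re z.im), sE2 z.re z.im⟫
        = -⟪u (sV z.re z.im) (sE1 z.re z.im), sE1 z.re z.im⟫ := by
      have := frame_trace (u (sV z.re z.im)) (on_s z.re z.im) hsymA
        (hker _ hmem) (htr _ hmem)
      linarith
    obtain ⟨hE1, hE2⟩ := expand_inner (u (sV z.re z.im)) (sE1 z.re z.im) (sE2 z.re z.im)
      ((z.re^2-z.im^2)/(z.re^2+z.im^2)) (2*z.re*z.im/(z.re^2+z.im^2)) hbb hcc
    have hgw : g ((starRingEnd ℂ z)⁻¹) =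
        ((((z.re^2-z.im^2)/(z.re^2+z.im^2))^2 - (2*z.re*z.im/(z.re^2+z.im^2))^2) *
          ⟪u (sV z.re z.im) (sE1 z.re z.im), sE1 z.re z.im⟫
          + 2*((z.re^2-z.im^2)/(z.re^2+z.im^2))*(2*z.re*z.im/(z.re^2+z.im^2)) *
          ⟪u (sV z.re z.im) (sE1 z.re z.im), sE2 z.re z.im⟫ : ℝ)
        + ((((z.re^2-z.im^2)/(z.re^2+z.im^2))^2 - (2*z.re*z.im/(z.re^2+z.im^2))^2) *
          ⟪u (sV z.re z.im) (sE1 z.re z.im), sE2 z.re z.im⟫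
          - 2*((z.re^2-z.im^2)/(z.re^2+z.im^2))*(2*z.re*z.im/(z.re^2+z.im^2)) *
          ⟪u (sV z.re z.im) (sE1 z.re z.im), sE1 z.re z.im⟫ : ℝ) * Complex.I := by
      rw [hgdef]
      simp only []
      rw [hwre, hwim, tV_eq z.re z.im hr2, tE1_eq z.re z.im hr2, tE2_eq z.re z.im hr2,
        hE1, hE2]
    rw [hgw]
    have hC : ((z.re^2-z.im^2)/(z.re^2+z.im^2)) * (z.re^2+z.im^2) = z.re^2 - z.im^2 := by
      field_simp
    have hS : (2*z.re*z.im/(z.re^2+z.im^2)) * (z.re^2+z.im^2) = 2*z.re*z.im := by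
      field_simp
    have hCS : ((z.re^2-z.im^2)/(z.re^2+z.im^2))^2 + (2*z.re*z.im/(z.re^2+z.im^2))^2 = 1 := by
      field_simp
      ring
    exact complex_chart_rel z _ _ _ _ hC hS hCS
  -- the endgame
  set G : ℂ := g 0 with hGdef
  have hGne : G ≠ 0 := hgne 0
  have hcg : ContinuousAt g 0 := hgc.continuousAt
  rw [Metric.continuousAt_iff] at hcg
  obtain ⟨δ, hδpos, hδ⟩ := hcg ‖G‖ (norm_pos_iff.mpr hGne)
  set R : ℝ := 1/δ + 1 with hRdef
  have hRpos : 0 < R := by positivity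
  have hinvR : 1/R < δ := by
    have h1 : δ * R = 1 + δ := by
      rw [hRdef]; field_simp
    rw [div_lt_iff₀ hRpos]
    nlinarith
  refine windingW f hfc hfne R hRpos G hGne ?_
  intro z hzR
  have hzne : z ≠ 0 := by
    intro h
    rw [h] at hzR
    simp at hzR
    exact absurd hzR.symm (ne_of_gt hRpos)
  have hcne : (starRingEnd ℂ) z ≠ 0 := by
    simpa using hzne
  have habsz : ‖z‖ ≠ 0 := by
    rw [hzR]; exact ne_of_gt hRpos
  have hwd : dist ((starRingEnd ℂ z)⁻¹) 0 < δ := by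
    rw [dist_zero_right, norm_inv, Complex.norm_conj, hzR]
    rw [inv_eq_one_div]
    exact hinvR
  have hgd := hδ hwd
  rw [← hGdef, Complex.dist_eq] at hgd
  have key : f z - (z/(starRingEnd ℂ) z)^2 * G
      = (z/(starRingEnd ℂ) z)^2 * (g ((starRingEnd ℂ z)⁻¹) - G) := by
    have h := hrel z hzne
    field_simp
    rw [one_div]
    linear_combination -h
  rw [key, norm_mul, norm_pow, norm_div, Complex.norm_conj, div_self habsz, one_pow, one_mul]
  exact hgd
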